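/- Let (β_t^x)_{t≥0} be the aperiodic nearest-neighbors branching random walk on ℤ^d started by a single particle at x, and let p_n(x) = ℙ(τ_n^x < ∞). For every n ≥ 1 and all x, y in the intersection of the positive orthant ℤ₊^d with the interior Λ̊_n^d, if x ⪯ y then p_n(x) ≤ p_n(y). -/

import Mathlib

open scoped ENNReal
open MeasureTheory Filter

namespace BRW

/-- Sites of the lattice `ℤ^d`. -/
abbrev Site (d : ℕ) := Fin d → ℤ

/-- A configuration of particles: finitely many particles, `η z` particles at site `z`. -/
abbrev Config (d : ℕ) := Site d →₀ ℕ

noncomputable instance (d : ℕ) : MeasurableSpace (Config d) := ⊤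
noncomputable instance (d : ℕ) : MeasurableSpace (List (Config d)) := ⊤

instance (d : ℕ) : Inhabited (Config d) := ⟨0⟩

/-- Uniform distribution on a finite set (junk value if the set is empty). -/
noncomputable def unifOn {α : Type*} [Inhabited α] (s : Finset α) : PMF α :=
  if h : s.Nonempty then PMF.uniformOfFinset s h else PMF.pure default

/-- Bernoulli distribution (junk value if `p > 1`). -/
noncomputable def bern (p : ℝ≥0∞) : PMF Bool :=
  if h : p ≤ 1 then PMF.bernoulli p.toNNReal
    (by simpa using ENNReal.toNNReal_mono ENNReal.one_ne_top h) else PMF.pure true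

/-- Convolution of two `PMF`s on an additive monoid: the law of a sum of independent samples. -/
noncomputable def conv {α : Type*} [AddCommMonoid α] (p q : PMF α) : PMF α :=
  p.bind fun a => q.bind fun b => PMF.pure (a + b)

instance {α : Type*} [AddCommMonoid α] : Std.Commutative (conv (α := α)) where
  comm p q := by
    unfold conv
    rw [PMF.bind_comm]
    refine congrArg _ (funext fun b => congrArg _ (funext fun a => ?_))
    rw [add_comm]

instance {α : Type*} [AddCommMonoid α] : Std.Associative (conv (α := α)) where
  assoc p q r := by
    simp only [conv, PMF.bind_bind, PMF.pure_bind, add_assoc]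

/-- `n`-fold convolution: the law of a sum of `n` independent samples of `p`. -/
noncomputable def iterConv {α : Type*} [AddCommMonoid α] (p : PMF α) : ℕ → PMF α
  | 0 => PMF.pure 0
  | n + 1 => conv p (iterConv p n)

variable {d : ℕ}

/-- The nearest neighbors (`L¹`-distance exactly one) of a site. -/
def nbrs (z : Site d) : Finset (Site d) :=
  (Finset.univ ×ˢ ({1, -1} : Finset ℤ)).image fun p => Function.update z p.1 (z p.1 + p.2)

/-- Law of the configuration of children of one particle at `z`: a random number of offspring
distributed according to `P`, each placed independently and uniformly at random on `nbr z`. -/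
noncomputable def childLaw (P : PMF ℕ) (nbr : Site d → Finset (Site d)) (z : Site d) :
    PMF (Config d) :=
  P.bind fun n => iterConv ((unifOn (nbr z)).map fun w => Finsupp.single w 1) n

/-- Children law of the aperiodic walk: offspring are placed uniformly on the `2d+1` sites at
`L¹`-distance at most `1` from the parent. -/
noncomputable def aperiodicChild (P : PMF ℕ) (z : Site d) : PMF (Config d) :=
  childLaw P (fun w => insert w (nbrs w)) z

/-- Children law of the periodic walk: offspring are placed uniformly on the `2d` nearest
neighbors of the parent. -/
noncomputable def periodicChild (P : PMF ℕ) (z : Site d) : PMF (Config d) :=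
  childLaw P nbrs z

/-- Children law of the `π`-survival periodic walk: offspring placed uniformly on the nearest
neighbors, and in addition the particle itself survives with probability `π`, independently. -/
noncomputable def survChild (P : PMF ℕ) (π : ℝ≥0∞) (z : Site d) : PMF (Config d) :=
  conv (periodicChild P z) ((bern π).map fun b => if b then Finsupp.single z 1 else 0)

/-- One-step transition of a branching random walk with given children law: every particle
produces, independently of all other particles, a random children configuration. -/
noncomputable def stepOf (child : Site d → PMF (Config d)) (η : Config d) : PMF (Config d) :=
  Finset.fold conv (PMF.pure 0) (fun z => iterConv (child z) (η z)) η.support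

/-- One-step transition of the aperiodic nearest-neighbors branching random walk. -/
noncomputable def aperiodicStep (P : PMF ℕ) : Config d → PMF (Config d) :=
  stepOf (aperiodicChild P)

/-- One-step transition of the periodic nearest-neighbors branching random walk. -/
noncomputable def periodicStep (P : PMF ℕ) : Config d → PMF (Config d) :=
  stepOf (periodicChild P)

/-- One-step transition of the `π`-survival periodic nearest-neighbors branching random walk. -/
noncomputable def survStep (P : PMF ℕ) (π : ℝ≥0∞) : Config d → PMF (Config d) :=
  stepOf (survChild P π)

/-- The law of the configuration at time `t` of the Markov chain with one-step transition `step`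
started from configuration `init`. -/
noncomputable def timeLaw (step : Config d → PMF (Config d)) (init : Config d) :
    ℕ → PMF (Config d)
  | 0 => PMF.pure init
  | t + 1 => (timeLaw step init t).bind step

/-- The law of the trajectory up to time `t`, recorded as the list `[η_t, η_{t-1}, ..., η_0]`. -/
noncomputable def pathLaw (step : Config d → PMF (Config d)) (init : Config d) :
    ℕ → PMF (List (Config d))
  | 0 => PMF.pure [init]
  | t + 1 => (pathLaw step init t).bind fun l => (step l.headI).map fun c => c :: l

/-- `z ∈ ∂Λ_n`, the boundary of the hypercube `Λ_n = {z : ‖z‖_∞ ≤ n}`. -/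
def onBdry (n : ℕ) (z : Site d) : Prop :=
  (∀ i, |z i| ≤ (n : ℤ)) ∧ ∃ i, |z i| = (n : ℤ)

/-- `z ∈ Λ̊_n`, the interior of the hypercube `Λ_n`. -/
def inInterior (n : ℕ) (z : Site d) : Prop :=
  ∀ i, |z i| < (n : ℤ)

/-- The configuration `η` has no particle on `∂Λ_n`. -/
def avoids (n : ℕ) (η : Config d) : Prop :=
  ∀ z : Site d, onBdry n z → η z = 0

/-- `ℙ(τ_n > t)`: the probability that the branching random walk with one-step transition `step`
started from `init` puts no particle on `∂Λ_n` at any time `0, 1, ..., t`. -/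
noncomputable def survProb (step : Config d → PMF (Config d)) (init : Config d) (n t : ℕ) :
    ℝ≥0∞ :=
  (pathLaw step init t).toMeasure {l | ∀ c ∈ l, avoids n c}

/-- `p_n = ℙ(τ_n < ∞)`: the probability that some particle ever reaches `∂Λ_n`. -/
noncomputable def hitProb (step : Config d → PMF (Config d)) (init : Config d) (n : ℕ) : ℝ≥0∞ :=
  1 - ⨅ t : ℕ, survProb step init n t

/-- `ℙ(X(z) > k)` when the configuration `X` is distributed according to `p`. -/
noncomputable def tailProb (p : PMF (Config d)) (z : Site d) (k : ℕ) : ℝ≥0∞ :=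
  p.toMeasure {η | k < η z}

/-- The hitting time of `∂Λ_n` by a trajectory of configurations, valued in `ℕ ∪ {∞}`. -/
noncomputable def hitTime (n : ℕ) (f : ℕ → Config d) : ℕ∞ :=
  sInf ((fun t : ℕ => (t : ℕ∞)) '' {t | ¬ avoids n (f t)})

/-- The process `X` on the probability space `(Ω, Pr)` is a realization of (i.e., has the law of)
the branching random walk with one-step transition `step` started from `init`: for every `t`, the
trajectory up to time `t` has law `pathLaw step init t`. -/
def HasPathLaw {Ω : Type*} [MeasurableSpace Ω] (Pr : Measure Ω)
    (step : Config d → PMF (Config d)) (init : Config d) (X : ℕ → Ω → Config d) : Prop :=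
  ∀ t : ℕ, Measure.map (fun ω => (List.range (t + 1)).map fun s => X (t - s) ω) Pr
    = (pathLaw step init t).toMeasure

end BRW

namespace BRW
section Aux

open scoped Classical

variable {d : ℕ}

/-! ### Expectation machinery for PMFs -/

/-- Expectation of a nonnegative functional under a PMF. -/
noncomputable def EE {α : Type*} (p : PMF α) (F : α → ℝ≥0∞) : ℝ≥0∞ := ∑' a, p a * F a

lemma EE_pure {α : Type*} (a : α) (F : α → ℝ≥0∞) : EE (PMF.pure a) F = F a := by
  rw [EE, tsum_eq_single a]
  · simp [PMF.pure_apply]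
  · intro b hb; simp [PMF.pure_apply, hb]

lemma EE_bind {α β : Type*} (p : PMF α) (f : α → PMF β) (F : β → ℝ≥0∞) :
    EE (p.bind f) F = EE p fun a => EE (f a) F := by
  simp only [EE, PMF.bind_apply]
  calc ∑' b, (∑' a, p a * f a b) * F b
      = ∑' b, ∑' a, p a * f a b * F b := by
        refine tsum_congr fun b => ?_; exact ENNReal.tsum_mul_right.symm
    _ = ∑' a, ∑' b, p a * f a b * F b := ENNReal.tsum_comm
    _ = ∑' a, p a * ∑' b, f a b * F b := by
        refine tsum_congr fun a => ?_
        simp_rw [mul_assoc]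
        exact ENNReal.tsum_mul_left

lemma EE_map {α β : Type*} (p : PMF α) (g : α → β) (F : β → ℝ≥0∞) :
    EE (p.map g) F = EE p fun a => F (g a) := by
  rw [PMF.map, EE_bind]
  simp only [Function.comp, EE_pure]

lemma EE_congr {α : Type*} {p : PMF α} {F G : α → ℝ≥0∞} (h : ∀ a, F a = G a) :
    EE p F = EE p G := by
  unfold EE; exact tsum_congr fun a => by rw [h a]

lemma EE_congr_support {α : Type*} {p : PMF α} {F G : α → ℝ≥0∞}
    (h : ∀ a, p a ≠ 0 → F a = G a) : EE p F = EE p G := by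
  unfold EE
  refine tsum_congr fun a => ?_
  by_cases ha : p a = 0
  · rw [ha, zero_mul, zero_mul]
  · rw [h a ha]

lemma EE_mul_const {α : Type*} (p : PMF α) (F : α → ℝ≥0∞) (c : ℝ≥0∞) :
    EE p (fun a => F a * c) = EE p F * c := by
  unfold EE
  simp_rw [← mul_assoc]
  exact ENNReal.tsum_mul_right

lemma EE_conv {α : Type*} [AddCommMonoid α] (p q : PMF α) (F : α → ℝ≥0∞)
    (hF : ∀ a b, F (a + b) = F a * F b) :
    EE (conv p q) F = EE p F * EE q F := by
  rw [conv, EE_bind]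
  have h1 : ∀ a, EE (q.bind fun b => PMF.pure (a + b)) F = F a * EE q F := by
    intro a
    rw [EE_bind]
    have : ∀ b, EE (PMF.pure (a + b)) F = F a * F b := fun b => by rw [EE_pure, hF]
    rw [EE_congr this]
    unfold EE
    simp_rw [← mul_assoc, mul_comm _ (F a), mul_assoc]
    exact ENNReal.tsum_mul_left
  rw [EE_congr h1]
  exact EE_mul_const p F (EE q F)

lemma EE_iterConv {α : Type*} [AddCommMonoid α] (p : PMF α) (F : α → ℝ≥0∞)
    (hF : ∀ a b, F (a + b) = F a * F b) (hF0 : F 0 = 1) (N : ℕ) :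
    EE (iterConv p N) F = (EE p F) ^ N := by
  induction N with
  | zero => simp [iterConv, EE_pure, hF0]
  | succ N ih =>
      rw [iterConv, EE_conv p _ F hF, ih, pow_succ, mul_comm]

lemma toMeasure_eq_EE {α : Type*} [MeasurableSpace α] (h : ∀ s : Set α, MeasurableSet s)
    (p : PMF α) (s : Set α) :
    p.toMeasure s = EE p fun a => if a ∈ s then 1 else 0 := by
  rw [PMF.toMeasure_apply p (h s)]
  refine tsum_congr fun a => ?_
  by_cases ha : a ∈ s <;> simp [Set.indicator_apply, ha]

lemma measurableSet_config (d : ℕ) (s : Set (Config d)) : MeasurableSet s :=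
  MeasurableSpace.measurableSet_top

lemma measurableSet_list_config (d : ℕ) (s : Set (List (Config d))) : MeasurableSet s :=
  MeasurableSpace.measurableSet_top

/-! ### conv and iterConv basics -/

lemma conv_pure_left {α : Type*} [AddCommMonoid α] (p : PMF α) :
    conv (PMF.pure 0) p = p := by
  rw [conv, PMF.pure_bind]
  simp only [zero_add]
  exact PMF.bind_pure p

lemma conv_pure_right {α : Type*} [AddCommMonoid α] (p : PMF α) :
    conv p (PMF.pure 0) = p := by
  rw [Std.Commutative.comm (op := conv) p (PMF.pure 0)]
  exact conv_pure_left p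

lemma conv_assoc {α : Type*} [AddCommMonoid α] (p q r : PMF α) :
    conv (conv p q) r = conv p (conv q r) :=
  Std.Associative.assoc (op := conv) p q r

lemma iterConv_add {α : Type*} [AddCommMonoid α] (p : PMF α) (m k : ℕ) :
    iterConv p (m + k) = conv (iterConv p m) (iterConv p k) := by
  induction m with
  | zero => simp only [Nat.zero_add, iterConv, conv_pure_left]
  | succ m ih =>
      have : m + 1 + k = (m + k) + 1 := by omega
      rw [this, iterConv, ih, iterConv, conv_assoc]

end Aux
section Aux2

open scoped Classical

variable {d : ℕ}

lemma stepOf_zero (child : Site d → PMF (Config d)) :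
    stepOf child (0 : Config d) = PMF.pure 0 := by
  simp [stepOf]

lemma stepOf_single_add (child : Site d → PMF (Config d)) (z : Site d) (m : ℕ) (ρ : Config d) :
    stepOf child (Finsupp.single z m + ρ)
      = conv (iterConv (child z) m) (stepOf child ρ) := by
  rcases Nat.eq_zero_or_pos m with rfl | hm
  · simp only [Finsupp.single_zero, zero_add, iterConv]
    rw [conv_pure_left]
  · have hsupp : (Finsupp.single z m + ρ).support = insert z ρ.support := by
      ext w
      by_cases hw : w = z
      · subst hw
        simp [Finsupp.mem_support_iff, Finsupp.add_apply, Finsupp.single_apply]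
        omega
      · simp [Finsupp.mem_support_iff, Finsupp.add_apply, Finsupp.single_apply, hw, Ne.symm hw]
    set s : Finset (Site d) := ρ.support.erase z with hs
    have hzs : z ∉ s := Finset.notMem_erase z _
    have hins : insert z ρ.support = insert z s := by
      ext w
      by_cases hw : w = z <;> simp [hs, hw]
    have hfold : ∀ (f : Site d → PMF (Config d)),
        Finset.fold conv (PMF.pure 0) f (insert z s) = conv (f z) (Finset.fold conv (PMF.pure 0) f s) :=
      fun f => Finset.fold_insert hzs
    have hcongr : Finset.fold conv (PMF.pure 0)
        (fun w => iterConv (child w) ((Finsupp.single z m + ρ) w)) s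
        = Finset.fold conv (PMF.pure 0) (fun w => iterConv (child w) (ρ w)) s := by
      refine Finset.fold_congr fun w hw => ?_
      have hwz : w ≠ z := Finset.ne_of_mem_erase hw
      rw [Finsupp.add_apply, Finsupp.single_apply, if_neg (Ne.symm hwz), Nat.zero_add]
    rw [stepOf, hsupp, hins, hfold, hcongr]
    have hz : (Finsupp.single z m + ρ) z = m + ρ z := by
      rw [Finsupp.add_apply, Finsupp.single_apply, if_pos rfl]
    rw [hz]
    by_cases hzρ : ρ z = 0
    · have : ρ.support = s := by rw [hs, Finset.erase_eq_of_notMem (by simp [Finsupp.mem_support_iff, hzρ])]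
      rw [stepOf, this, hzρ, Nat.add_zero]
    · have hmem : z ∈ ρ.support := Finsupp.mem_support_iff.mpr hzρ
      have : ρ.support = insert z s := by rw [hs, Finset.insert_erase hmem]
      rw [stepOf, this, hfold, iterConv_add, conv_assoc]

lemma stepOf_add (child : Site d → PMF (Config d)) (η ξ : Config d) :
    stepOf child (η + ξ) = conv (stepOf child η) (stepOf child ξ) := by
  induction η using Finsupp.induction with
  | zero => rw [zero_add, stepOf_zero, conv_pure_left]
  | single_add z m η' hz hm ih =>
      rw [add_assoc, stepOf_single_add, ih, stepOf_single_add, ← conv_assoc]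

lemma stepOf_single_one (child : Site d → PMF (Config d)) (z : Site d) :
    stepOf child (Finsupp.single z 1) = child z := by
  have : (Finsupp.single z 1 : Config d) = Finsupp.single z 1 + 0 := by rw [add_zero]
  rw [this, stepOf_single_add, stepOf_zero, conv_pure_right, iterConv, iterConv, conv_pure_right]

end Aux2
section Aux3

open scoped Classical

variable {d : ℕ}

lemma PMF_bind_congr {α β : Type*} (p : PMF α) (f g : α → PMF β)
    (h : ∀ a ∈ p.support, f a = g a) : p.bind f = p.bind g := by
  ext b
  simp only [PMF.bind_apply]
  refine tsum_congr fun a => ?_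
  by_cases ha : p a = 0
  · simp [ha]
  · rw [h a ((PMF.mem_support_iff p a).mpr ha)]

lemma pathLaw_ne_nil (step : Config d → PMF (Config d)) (init : Config d) :
    ∀ t, ∀ l ∈ (pathLaw step init t).support, l ≠ [] := by
  intro t
  cases t with
  | zero =>
      intro l hl
      rw [pathLaw, PMF.support_pure] at hl
      simp only [Set.mem_singleton_iff] at hl
      subst hl; simp
  | succ t =>
      intro l hl
      rw [pathLaw, PMF.mem_support_bind_iff] at hl
      obtain ⟨l', _, hl⟩ := hl
      rw [PMF.mem_support_map_iff] at hl
      obtain ⟨c, _, hc⟩ := hl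
      subst hc; simp

lemma pathLaw_succ_eq (step : Config d → PMF (Config d)) (init : Config d) (t : ℕ) :
    pathLaw step init (t + 1)
      = (step init).bind fun η => (pathLaw step η t).map (· ++ [init]) := by
  induction t with
  | zero =>
      show (pathLaw step init 0).bind _ = _
      rw [pathLaw, PMF.pure_bind]
      simp only [List.headI]
      refine PMF_bind_congr _ _ _ fun η _ => ?_
      rw [pathLaw, PMF.pure_map]
      rfl
  | succ t ih =>
      show (pathLaw step init (t+1)).bind _ = _
      rw [ih, PMF.bind_bind]
      refine (PMF_bind_congr _ _ _ fun η _ => ?_)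
      rw [PMF.bind_map]
      have hcongr : ∀ l ∈ (pathLaw step η t).support,
          ((fun l : List (Config d) => (step l.headI).map fun c => c :: l) ∘ (· ++ [init])) l
            = ((step l.headI).map fun c => c :: l).map (· ++ [init]) := by
        intro l hl
        have hne : l ≠ [] := pathLaw_ne_nil step η t l hl
        have hhead : (l ++ [init]).headI = l.headI := by
          cases l with
          | nil => exact absurd rfl hne
          | cons c l => rfl
        simp only [Function.comp, hhead, PMF.map_comp]
        rfl
      rw [PMF_bind_congr _ _ _ hcongr, ← PMF.map_bind]
      rfl

/-- Indicator of avoiding. -/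
noncomputable def avI (n : ℕ) (η : Config d) : ℝ≥0∞ := if avoids n η then 1 else 0

/-- Indicator that every configuration in a list avoids the boundary. -/
noncomputable def indA (n : ℕ) (l : List (Config d)) : ℝ≥0∞ :=
  if ∀ c ∈ l, avoids n c then 1 else 0

lemma survProb_eq_EE (step : Config d → PMF (Config d)) (init : Config d) (n t : ℕ) :
    survProb step init n t = EE (pathLaw step init t) (indA n) := by
  rw [survProb, toMeasure_eq_EE (measurableSet_list_config d)]
  exact EE_congr fun l => by by_cases h : ∀ c ∈ l, avoids n c <;> simp [indA, h]

lemma indA_append (n : ℕ) (l : List (Config d)) (c : Config d) :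
    indA n (l ++ [c]) = indA n l * avI n c := by
  have h : (∀ c' ∈ l ++ [c], avoids n c') ↔ (∀ c' ∈ l, avoids n c') ∧ avoids n c := by
    constructor
    · intro hh
      exact ⟨fun c' hc' => hh c' (List.mem_append_left _ hc'),
        hh c (List.mem_append_right _ (List.mem_singleton_self c))⟩
    · rintro ⟨hl, hc⟩ c' hc'
      rcases List.mem_append.mp hc' with h1 | h1
      · exact hl c' h1
      · rw [List.mem_singleton.mp h1]; exact hc
  rw [indA, indA, avI, if_congr h rfl rfl]
  by_cases h1 : ∀ c' ∈ l, avoids n c' <;> by_cases h2 : avoids n c <;> simp [h1, h2]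

lemma survProb_zero_eq (step : Config d → PMF (Config d)) (init : Config d) (n : ℕ) :
    survProb step init n 0 = avI n init := by
  rw [survProb_eq_EE, pathLaw, EE_pure, indA, avI]
  simp only [List.mem_singleton, forall_eq]

lemma survProb_succ_eq (step : Config d → PMF (Config d)) (init : Config d) (n t : ℕ) :
    survProb step init n (t + 1)
      = avI n init * EE (step init) fun η => survProb step η n t := by
  calc survProb step init n (t+1)
      = EE (pathLaw step init (t+1)) (indA n) := survProb_eq_EE _ _ _ _
    _ = EE ((step init).bind fun η => (pathLaw step η t).map (· ++ [init])) (indA n) := by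
        rw [pathLaw_succ_eq]
    _ = EE (step init) fun η => EE ((pathLaw step η t).map (· ++ [init])) (indA n) :=
        EE_bind _ _ _
    _ = EE (step init) fun η => EE (pathLaw step η t) (indA n) * avI n init := by
        refine EE_congr fun η => ?_
        rw [EE_map]
        calc (EE (pathLaw step η t) fun l => indA n (l ++ [init]))
            = EE (pathLaw step η t) fun l => indA n l * avI n init :=
              EE_congr fun l => indA_append n l init
          _ = EE (pathLaw step η t) (indA n) * avI n init := EE_mul_const _ _ _
    _ = (EE (step init) fun η => survProb step η n t) * avI n init := by
        rw [← EE_mul_const]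
        exact EE_congr fun η => by rw [survProb_eq_EE]
    _ = avI n init * EE (step init) fun η => survProb step η n t := mul_comm _ _

lemma avoids_add_iff (n : ℕ) (η ξ : Config d) :
    avoids n (η + ξ) ↔ avoids n η ∧ avoids n ξ := by
  unfold avoids
  constructor
  · intro h
    constructor <;> intro z hz <;> have := h z hz <;>
      rw [Finsupp.add_apply] at this <;> omega
  · intro ⟨h1, h2⟩ z hz
    rw [Finsupp.add_apply, h1 z hz, h2 z hz]

lemma avI_add (n : ℕ) (η ξ : Config d) : avI n (η + ξ) = avI n η * avI n ξ := by
  by_cases h1 : avoids n η <;> by_cases h2 : avoids n ξ <;>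
    simp [avI, avoids_add_iff, h1, h2]

lemma survProb_stepOf_add (child : Site d → PMF (Config d)) (n : ℕ) :
    ∀ t (η ξ : Config d),
      survProb (stepOf child) (η + ξ) n t
        = survProb (stepOf child) η n t * survProb (stepOf child) ξ n t := by
  intro t
  induction t with
  | zero => intro η ξ; rw [survProb_zero_eq, survProb_zero_eq, survProb_zero_eq, avI_add]
  | succ t ih =>
      intro η ξ
      rw [survProb_succ_eq, survProb_succ_eq, survProb_succ_eq, stepOf_add,
        EE_conv _ _ _ (fun a b => ih a b), avI_add]
      ring

lemma survProb_zero_config (child : Site d → PMF (Config d)) (n : ℕ) :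
    ∀ t, survProb (stepOf child) 0 n t = 1 := by
  intro t
  induction t with
  | zero =>
      rw [survProb_zero_eq, avI, if_pos]
      intro z _; rfl
  | succ t ih =>
      rw [survProb_succ_eq, stepOf_zero, EE_pure, ih, avI, if_pos, one_mul]
      intro z _; rfl

end Aux3
section Aux4

open scoped Classical

variable {d : ℕ}

/-- Average of `f` over the `2d+1` sites at distance at most one from `z`. -/
noncomputable def avgNbr (f : Site d → ℝ≥0∞) (z : Site d) : ℝ≥0∞ :=
  EE (unifOn (insert z (nbrs z))) f

/-- The survival function of a single-particle branching random walk killed on `{z | ¬ K z}`. -/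
noncomputable def killedFn (P : PMF ℕ) (K : Site d → Prop) : ℕ → Site d → ℝ≥0∞
  | 0, z => if K z then 1 else 0
  | t + 1, z => (if K z then 1 else 0) * ∑' N, P N * (avgNbr (killedFn P K t) z) ^ N

lemma avoids_single_iff (n : ℕ) (z : Site d) :
    avoids n (Finsupp.single z 1 : Config d) ↔ ¬ onBdry n z := by
  constructor
  · intro h hz
    have := h z hz
    rw [Finsupp.single_apply, if_pos rfl] at this
    exact one_ne_zero this
  · intro h w hw
    rw [Finsupp.single_apply, if_neg]
    rintro rfl
    exact h hw

lemma survProb_single_eq_killedFn (P : PMF ℕ) (n : ℕ) :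
    ∀ t (z : Site d),
      survProb (aperiodicStep P) (Finsupp.single z 1) n t
        = killedFn P (fun w => ¬ onBdry n w) t z := by
  intro t
  induction t with
  | zero =>
      intro z
      rw [survProb_zero_eq, killedFn, avI, if_congr (avoids_single_iff n z) rfl rfl]
      by_cases h : onBdry n z <;> simp [h]
  | succ t ih =>
      intro z
      rw [aperiodicStep] at *
      rw [survProb_succ_eq, killedFn]
      congr 1
      · rw [avI, if_congr (avoids_single_iff n z) rfl rfl]
        by_cases h : onBdry n z <;> simp [h]
      · rw [stepOf_single_one, aperiodicChild, childLaw, EE_bind]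
        refine tsum_congr fun N => ?_
        beta_reduce
        congr 1
        have hmul : ∀ η ξ : Config d,
            survProb (stepOf (aperiodicChild P)) (η + ξ) n t
              = survProb (stepOf (aperiodicChild P)) η n t
                * survProb (stepOf (aperiodicChild P)) ξ n t :=
          survProb_stepOf_add _ n t
        rw [EE_iterConv _ _ hmul (survProb_zero_config _ n t), EE_map]
        congr 1
        rw [avgNbr]
        exact EE_congr fun w => ih w
end Aux4
section Aux5

open scoped Classical

variable {d : ℕ}

lemma mem_nbrs_iff {z w : Site d} :
    w ∈ nbrs z ↔ ∃ (j : Fin d) (ε : ℤ), (ε = 1 ∨ ε = -1) ∧ w = Function.update z j (z j + ε) := by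
  rw [nbrs, Finset.mem_image]
  constructor
  · rintro ⟨⟨j, ε⟩, hmem, rfl⟩
    rw [Finset.mem_product, Finset.mem_insert, Finset.mem_singleton] at hmem
    exact ⟨j, ε, hmem.2, rfl⟩
  · rintro ⟨j, ε, hε, rfl⟩
    refine ⟨⟨j, ε⟩, ?_, rfl⟩
    rw [Finset.mem_product, Finset.mem_insert, Finset.mem_singleton]
    exact ⟨Finset.mem_univ j, hε⟩

lemma not_mem_nbrs_self (z : Site d) : z ∉ nbrs z := by
  rw [mem_nbrs_iff]
  rintro ⟨j, ε, hε, hz⟩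
  have := congrFun hz j
  rw [Function.update_self] at this
  rcases hε with rfl | rfl <;> omega

lemma nbrs_injOn (z : Site d) :
    Set.InjOn (fun p : Fin d × ℤ => Function.update z p.1 (z p.1 + p.2))
      ((Finset.univ ×ˢ ({1, -1} : Finset ℤ) : Finset (Fin d × ℤ)) : Set (Fin d × ℤ)) := by
  rintro ⟨j, ε⟩ hj ⟨k, δ⟩ hk h
  simp only [Finset.coe_product, Set.mem_prod, Finset.coe_insert, Set.mem_insert_iff,
    Finset.coe_singleton, Set.mem_singleton_iff] at hj hk
  by_cases hjk : j = k
  · subst hjk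
    have h2 := congrFun h j
    simp only [Function.update_self] at h2
    have : ε = δ := by omega
    subst this; rfl
  · exfalso
    have h1 := congrFun h j
    simp only [Function.update_self, Function.update_of_ne hjk] at h1
    rcases hj.2 with rfl | rfl <;> omega

lemma card_insert_nbrs (z : Site d) : (insert z (nbrs z)).card = 2 * d + 1 := by
  rw [Finset.card_insert_of_notMem (not_mem_nbrs_self z), nbrs,
    Finset.card_image_of_injOn (nbrs_injOn z), Finset.card_product, Finset.card_univ]
  simp [Fintype.card_fin]
  ring

lemma sum_insert_nbrs (z : Site d) (f : Site d → ℝ≥0∞) :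
    ∑ w ∈ insert z (nbrs z), f w
      = f z + ∑ j : Fin d,
          (f (Function.update z j (z j + 1)) + f (Function.update z j (z j + (-1)))) := by
  rw [Finset.sum_insert (not_mem_nbrs_self z), nbrs,
    Finset.sum_image (fun p hp q hq h => nbrs_injOn z hp hq h), Finset.sum_product]
  congr 1
  refine Finset.sum_congr rfl fun j _ => ?_
  rw [show ({1, -1} : Finset ℤ) = insert 1 {-1} from rfl, Finset.sum_insert (by decide),
    Finset.sum_singleton]

lemma EE_unifOn {s : Finset (Site d)} (hs : s.Nonempty) (f : Site d → ℝ≥0∞) :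
    EE (unifOn s) f = ((s.card : ℝ≥0∞))⁻¹ * ∑ w ∈ s, f w := by
  rw [unifOn, dif_pos hs, EE]
  rw [tsum_eq_sum (s := s) (fun w hw => by simp [PMF.uniformOfFinset_apply, hw])]
  rw [Finset.mul_sum]
  exact Finset.sum_congr rfl fun w hw => by simp [PMF.uniformOfFinset_apply, hw]

lemma avgNbr_eq_sum (f : Site d → ℝ≥0∞) (z : Site d) :
    avgNbr f z = ((2 * d + 1 : ℕ) : ℝ≥0∞)⁻¹ * ∑ w ∈ insert z (nbrs z), f w := by
  rw [avgNbr, EE_unifOn (Finset.insert_nonempty z _), card_insert_nbrs]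

lemma mem_insert_nbrs_abs_le {n : ℕ} {z w : Site d} (hw : w ∈ insert z (nbrs z))
    (hz : inInterior n z) (j : Fin d) : |w j| ≤ (n : ℤ) := by
  rcases Finset.mem_insert.mp hw with rfl | hw
  · exact le_of_lt (hz j)
  · rw [mem_nbrs_iff] at hw
    obtain ⟨k, ε, hε, rfl⟩ := hw
    by_cases hjk : j = k
    · subst hjk
      rw [Function.update_self]
      rcases abs_lt.mp (hz j) with ⟨h1, h2⟩
      rw [abs_le]
      rcases hε with rfl | rfl <;> omega
    · rw [Function.update_of_ne hjk]
      exact le_of_lt (hz j)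

lemma killedFn_bdry_eq_interior (P : PMF ℕ) (n : ℕ) :
    ∀ t (z : Site d), (∀ j, |z j| ≤ (n : ℤ)) →
      killedFn P (fun w => ¬ onBdry n w) t z = killedFn P (inInterior n) t z := by
  have hiff : ∀ z : Site d, (∀ j, |z j| ≤ (n : ℤ)) → (¬ onBdry n z ↔ inInterior n z) := by
    intro z hz
    unfold onBdry inInterior
    constructor
    · intro h j
      rcases lt_or_eq_of_le (hz j) with h1 | h1
      · exact h1
      · exact absurd ⟨hz, j, h1⟩ h
    · rintro h ⟨_, j, hj⟩
      exact absurd hj (ne_of_lt (h j))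
  intro t
  induction t with
  | zero =>
      intro z hz
      rw [killedFn, killedFn]
      simp only [hiff z hz]
  | succ t ih =>
      intro z hz
      rw [killedFn, killedFn]
      simp only [hiff z hz]
      by_cases hint : inInterior n z
      · congr 1
        refine tsum_congr fun N => ?_
        congr 2
        rw [avgNbr, avgNbr]
        refine EE_congr_support fun w hw0 => ?_
        have hw : w ∈ insert z (nbrs z) := by
          by_contra hw
          refine hw0 ?_
          rw [unifOn, dif_pos (Finset.insert_nonempty z (nbrs z))]
          simp [PMF.uniformOfFinset_apply, hw]
        exact ih w (mem_insert_nbrs_abs_le hw hint)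
      · rw [if_neg hint, zero_mul, zero_mul]

end Aux5
section Aux6

open scoped Classical
open Function

variable {d : ℕ}

lemma interior_of_update {n : ℕ} {z : Site d} {i : Fin d} {b : ℤ}
    (hab : z i < b) (h1 : 1 ≤ z i + b) (h : inInterior n (Function.update z i b)) :
    inInterior n z := by
  intro j
  by_cases hj : j = i
  · subst hj
    have hb := h j
    rw [Function.update_self] at hb
    rw [abs_lt] at hb ⊢
    omega
  · have := h j
    rwa [Function.update_of_ne hj] at this

lemma killedFn_interior_mono (P : PMF ℕ) (n : ℕ) :
    ∀ t (z : Site d) (i : Fin d) (b : ℤ),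
      z i < b → 1 ≤ z i + b → Odd (z i + b) →
      killedFn P (inInterior n) t (Function.update z i b) ≤ killedFn P (inInterior n) t z := by
  intro t
  induction t with
  | zero =>
      intro z i b hab h1 _
      rw [killedFn, killedFn]
      by_cases h : inInterior n (Function.update z i b)
      · rw [if_pos h, if_pos (interior_of_update hab h1 h)]
      · rw [if_neg h]
        exact zero_le
  | succ t ih =>
      intro z i b hab h1 hodd
      set f := killedFn P (inInterior n) t with hf
      rw [killedFn, killedFn]
      by_cases h : inInterior n (Function.update z i b)
      swap
      · rw [if_neg h, zero_mul]
        exact zero_le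
      rw [if_pos h, if_pos (interior_of_update hab h1 h), one_mul, one_mul]
      refine ENNReal.tsum_le_tsum fun N => ?_
      refine mul_le_mul_right (pow_le_pow_left' ?_ N) _
      rw [avgNbr_eq_sum, avgNbr_eq_sum]
      refine mul_le_mul_right ?_ _
      rw [sum_insert_nbrs, sum_insert_nbrs]
      set z' := Function.update z i b with hz'
      set G : Fin d → ℝ≥0∞ := fun j =>
        f (Function.update z' j (z' j + 1)) + f (Function.update z' j (z' j + (-1))) with hG
      set F : Fin d → ℝ≥0∞ := fun j =>
        f (Function.update z j (z j + 1)) + f (Function.update z j (z j + (-1))) with hF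
      have hsplitG : ∑ j : Fin d, G j = G i + ∑ j ∈ Finset.univ.erase i, G j :=
        (Finset.add_sum_erase _ G (Finset.mem_univ i)).symm
      have hsplitF : ∑ j : Fin d, F j = F i + ∑ j ∈ Finset.univ.erase i, F j :=
        (Finset.add_sum_erase _ F (Finset.mem_univ i)).symm
      rw [hsplitG, hsplitF]
      have hside : ∑ j ∈ Finset.univ.erase i, G j ≤ ∑ j ∈ Finset.univ.erase i, F j := by
        refine Finset.sum_le_sum fun j hj => ?_
        have hji : j ≠ i := Finset.ne_of_mem_erase hj
        have key : ∀ ε : ℤ,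
            f (Function.update z' j (z' j + ε)) ≤ f (Function.update z j (z j + ε)) := by
          intro ε
          have h1' : z' j = z j := Function.update_of_ne hji b z
          have h2' : Function.update z' j (z j + ε)
              = Function.update (Function.update z j (z j + ε)) i b := by
            rw [hz', Function.update_comm hji]
          have h3' : (Function.update z j (z j + ε)) i = z i :=
            Function.update_of_ne (Ne.symm hji) _ z
          rw [h1', h2']
          exact ih _ i b (by rw [h3']; exact hab) (by rw [h3']; exact h1) (by rw [h3']; exact hodd)
        exact add_le_add (key 1) (key (-1))
      have hui : ∀ c : ℤ, Function.update z' i c = Function.update z i c := by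
        intro c; rw [hz', Function.update_idem]
      have hb : z' i = b := Function.update_self i b z
      have huz : Function.update z i (z i) = z := Function.update_eq_self i z
      have happ : ∀ (c c' : ℤ), c < c' → c + c' = z i + b →
          f (Function.update z i c') ≤ f (Function.update z i c) := by
        intro c c' hlt hsum
        have hci : (Function.update z i c) i = c := Function.update_self i c z
        have hidem : Function.update (Function.update z i c) i c' = Function.update z i c' :=
          Function.update_idem c c' z
        rw [← hidem]
        refine ih _ i c' ?_ ?_ ?_ <;> rw [hci]
        · exact hlt
        · omega
        · rw [hsum]; exact hodd
      have hcenter : f z' + G i ≤ f z + F i := by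
        show f z' + (f (Function.update z' i (z' i + 1)) + f (Function.update z' i (z' i + (-1))))
            ≤ f z + (f (Function.update z i (z i + 1)) + f (Function.update z i (z i + (-1))))
        simp only [hb, hui]
        by_cases hcase : b = z i + 1
        · subst hcase
          have e1 : f (Function.update z i (z i + 1 + (-1))) = f z := by
            rw [show z i + 1 + (-1) = z i by ring, huz]
          rw [e1]
          have e2 : f (Function.update z i (z i + 1 + 1)) ≤ f (Function.update z i (z i + (-1))) :=
            happ (z i + (-1)) (z i + 1 + 1) (by omega) (by ring)
          have hfzb : f (Function.update z i (z i + 1)) ≤ f (Function.update z i (z i + 1)) := le_rfl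
          calc f (Function.update z i (z i + 1))
                + (f (Function.update z i (z i + 1 + 1)) + f z)
              ≤ f (Function.update z i (z i + 1))
                + (f (Function.update z i (z i + (-1))) + f z) :=
                add_le_add_right (add_le_add_left e2 _) _
            _ = f z + (f (Function.update z i (z i + 1)) + f (Function.update z i (z i + (-1)))) := by
                ring
        · have hsep : z i + 1 < b := by omega
          obtain ⟨k, hk⟩ := hodd
          have hsep2 : z i + 1 < b + (-1) := by omega
          have e0 : f (Function.update z i b) ≤ f z := by
            have := happ (z i) b hab (by ring)
            rwa [huz] at this
          have e1 : f (Function.update z i (b + 1)) ≤ f (Function.update z i (z i + (-1))) :=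
            happ (z i + (-1)) (b + 1) (by omega) (by ring)
          have e2 : f (Function.update z i (b + (-1))) ≤ f (Function.update z i (z i + 1)) :=
            happ (z i + 1) (b + (-1)) hsep2 (by ring)
          calc f (Function.update z i b)
                + (f (Function.update z i (b + 1)) + f (Function.update z i (b + (-1))))
              ≤ f z + (f (Function.update z i (z i + (-1))) + f (Function.update z i (z i + 1))) :=
                add_le_add e0 (add_le_add e1 e2)
            _ = f z + (f (Function.update z i (z i + 1)) + f (Function.update z i (z i + (-1)))) := by
                ring
      calc f z' + (G i + ∑ j ∈ Finset.univ.erase i, G j)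
            = (f z' + G i) + ∑ j ∈ Finset.univ.erase i, G j := (add_assoc _ _ _).symm
        _ ≤ (f z + F i) + ∑ j ∈ Finset.univ.erase i, F j := add_le_add hcenter hside
        _ = f z + (F i + ∑ j ∈ Finset.univ.erase i, F j) := add_assoc _ _ _

end Aux6
section Aux7

open scoped Classical

variable {d : ℕ}

lemma killedFn_mono_orthant_aux (P : PMF ℕ) (n t : ℕ) :
    ∀ (k : ℕ) (v w : Site d), 0 ≤ v → v ≤ w → (∑ j, (w j - v j)) = (k : ℤ) →
      killedFn P (inInterior n) t w ≤ killedFn P (inInterior n) t v := by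
  intro k
  induction k with
  | zero =>
      intro v w hv hvw hsum
      have hz : ∀ j ∈ Finset.univ, w j - v j = 0 := by
        rw [← Finset.sum_eq_zero_iff_of_nonneg fun j _ => sub_nonneg.mpr (show v j ≤ w j from hvw j)]
        simpa using hsum
      have : v = w := by
        funext j
        have := hz j (Finset.mem_univ j)
        omega
      rw [this]
  | succ k ih =>
      intro v w hv hvw hsum
      have hex : ∃ i, v i < w i := by
        by_contra hc
        push_neg at hc
        have hz : ∀ j ∈ Finset.univ, w j - v j = 0 := fun j _ => by
          have h1 : v j ≤ w j := hvw j
          have h2 : w j ≤ v j := hc j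
          omega
        rw [Finset.sum_congr rfl hz, Finset.sum_const_zero] at hsum
        omega
      obtain ⟨i, hi⟩ := hex
      set v' := Function.update v i (v i + 1) with hv'def
      have hv' : (0 : Site d) ≤ v' := by
        intro j
        show (0:ℤ) ≤ v' j
        by_cases hj : j = i
        · subst hj
          rw [hv'def, Function.update_self]
          have h1 : (0:ℤ) ≤ v j := hv j
          omega
        · rw [hv'def, Function.update_of_ne hj]
          exact hv j
      have hv'w : v' ≤ w := by
        intro j
        show v' j ≤ w j
        by_cases hj : j = i
        · subst hj
          rw [hv'def, Function.update_self]
          omega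
        · rw [hv'def, Function.update_of_ne hj]
          exact hvw j
      have hgsum : (∑ j, (w j - v' j)) = (k : ℤ) := by
        have hupdate : ∀ j, w j - v' j
            = Function.update (fun j => w j - v j) i (w i - (v i + 1)) j := by
          intro j
          by_cases hj : j = i
          · subst hj
            rw [hv'def, Function.update_self, Function.update_self]
          · rw [hv'def, Function.update_of_ne hj, Function.update_of_ne hj]
        rw [Finset.sum_congr rfl fun j _ => hupdate j, Finset.sum_update_of_mem (Finset.mem_univ i)]
        have h2 : ∑ j : Fin d, (w j - v j)
            = (w i - v i) + ∑ j ∈ Finset.univ.erase i, (w j - v j) :=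
          (Finset.add_sum_erase _ _ (Finset.mem_univ i)).symm
        rw [h2] at hsum
        rw [show Finset.univ \ {i} = Finset.univ.erase i from (Finset.erase_eq Finset.univ i).symm]
        omega
      refine le_trans (ih v' w hv' hv'w hgsum) ?_
      have hvi : (0:ℤ) ≤ v i := hv i
      have := killedFn_interior_mono P n t v i (v i + 1) (by omega)
        (by omega) ⟨v i, by ring⟩
      exact this

lemma killedFn_mono_orthant (P : PMF ℕ) (n t : ℕ) (v w : Site d)
    (hv : 0 ≤ v) (hvw : v ≤ w) :
    killedFn P (inInterior n) t w ≤ killedFn P (inInterior n) t v := by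
  have hk : 0 ≤ ∑ j, (w j - v j) := Finset.sum_nonneg fun j _ => sub_nonneg.mpr (show v j ≤ w j from hvw j)
  obtain ⟨k, hk⟩ := Int.eq_ofNat_of_zero_le hk
  exact killedFn_mono_orthant_aux P n t k v w hv hvw hk

end Aux7

/-- For the aperiodic nearest-neighbors branching random walk on `ℤ^d`
with offspring distribution `P`, for every `n ≥ 1` and all `x ⪯ y` in the intersection of the
positive orthant with the interior of `Λ_n`, we have `p_n(x) ≤ p_n(y)`. -/
theorem aperiodic_escapeProb_monotone
    (d : ℕ) (hd : 0 < d) (P : PMF ℕ) (n : ℕ) (hn : 1 ≤ n)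
    (x y : Site d) (hx0 : 0 ≤ x) (hy0 : 0 ≤ y) (hxy : x ≤ y)
    (hx : inInterior n x) (hy : inInterior n y) :
    hitProb (aperiodicStep P) (Finsupp.single x 1) n
      ≤ hitProb (aperiodicStep P) (Finsupp.single y 1) n := by
  have hxΛ : ∀ j, |x j| ≤ (n : ℤ) := fun j => le_of_lt (hx j)
  have hyΛ : ∀ j, |y j| ≤ (n : ℤ) := fun j => le_of_lt (hy j)
  have key : ∀ t, survProb (aperiodicStep P) (Finsupp.single y 1) n t
      ≤ survProb (aperiodicStep P) (Finsupp.single x 1) n t := by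
    intro t
    rw [survProb_single_eq_killedFn P n t x, survProb_single_eq_killedFn P n t y,
      killedFn_bdry_eq_interior P n t x hxΛ, killedFn_bdry_eq_interior P n t y hyΛ]
    exact killedFn_mono_orthant P n t x y hx0 hxy
  rw [hitProb, hitProb]
  exact tsub_le_tsub_left (iInf_mono key) 1

end BRW
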